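/- Let N = 2^J and x ∈ ℝ^N with short support of length m ≤ M, satisfying the non-cancellation condition. Set L := ⌈log₂ M⌉ + 1. Then there is at most one index j' ∈ {L, ..., J} such that the support of the reflected periodization x^{(j')} is contained in the last M entries, i.e., S^{(j')} ⊂ {2^{j'} − M, ..., 2^{j'} − 1}. -/

import Mathlib

open Matrix

/-- One step of reflected periodization: add the first half and the reflected second half. -/
noncomputable def halfSum (n : ℕ) (x : Fin (2 * n) → ℝ) : Fin n → ℝ :=
  fun k => x ⟨(k : ℕ), by have := k.isLt; omega⟩ +
           x ⟨2 * n - 1 - (k : ℕ), by have := k.isLt; omega⟩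

/-- Iterated reflected periodization, peeling off `s` halving steps. -/
noncomputable def perAux (j : ℕ) : (s : ℕ) → (Fin (2 ^ (j + s)) → ℝ) → Fin (2 ^ j) → ℝ
  | 0, x => x
  | s + 1, x => perAux j s (halfSum (2 ^ (j + s))
      (fun k => x (Fin.cast (by
        have h1 : j + (s + 1) = (j + s) + 1 := by omega
        rw [h1, pow_succ]; ring) k)))

/-- The reflected periodization `x^{(j)}` of `x ∈ ℝ^{2^J}`. -/
noncomputable def reflPer (J j : ℕ) (h : j ≤ J) (x : Fin (2 ^ J) → ℝ) : Fin (2 ^ j) → ℝ :=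
  perAux j (J - j) (fun k => x (Fin.cast (by rw [Nat.add_sub_cancel' h]) k))

/-- `y` has short (one-block) support of length `m` with first support index `μ`. -/
structure ShortSupp {n : ℕ} (y : Fin n → ℝ) (m μ : ℕ) : Prop where
  pos : 1 ≤ m
  bdd : μ + m ≤ n
  first : ∀ k : Fin n, (k : ℕ) = μ → y k ≠ 0
  last : ∀ k : Fin n, (k : ℕ) = μ + m - 1 → y k ≠ 0
  outside : ∀ k : Fin n, ((k : ℕ) < μ ∨ μ + m ≤ (k : ℕ)) → y k = 0

/-- Non-cancellation condition: if `m` is even, the first and last support entries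
do not sum to zero. -/
def NonCancel {n : ℕ} (y : Fin n → ℝ) (m μ : ℕ) : Prop :=
  Even m → ∀ a b : Fin n, (a : ℕ) = μ → (b : ℕ) = μ + m - 1 → y a + y b ≠ 0


/-- fold of an index mod `2^(j+1)` into `[0, 2^j)` by reflection. -/
def fold (j n : ℕ) : ℕ :=
  if n % 2^(j+1) < 2^j then n % 2^(j+1) else 2^(j+1) - 1 - n % 2^(j+1)

lemma two_pow_succ (j : ℕ) : (2:ℕ)^(j+1) = 2 * 2^j := by rw [pow_succ]; ring

lemma fold_lt (j n : ℕ) : fold j n < 2^j := by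
  unfold fold
  have h1 : n % 2^(j+1) < 2^(j+1) := Nat.mod_lt _ (by positivity)
  have h2 := two_pow_succ j
  have h3 : (0:ℕ) < 2^j := by positivity
  split <;> omega

lemma fold_congr {j a b : ℕ} (h : a % 2^(j+1) = b % 2^(j+1)) : fold j a = fold j b := by
  unfold fold; rw [h]

lemma fold_small {j n : ℕ} (h : n < 2^j) : fold j n = n := by
  have h2 := two_pow_succ j
  have : n % 2^(j+1) = n := Nat.mod_eq_of_lt (by omega)
  unfold fold; rw [this]; simp [h]

lemma fold_flip {j r : ℕ} (hr : r < 2^(j+1)) : fold j (2^(j+1) - 1 - r) = fold j r := by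
  have h2 := two_pow_succ j
  have h3 : (0:ℕ) < 2^j := by positivity
  have e1 : (2^(j+1) - 1 - r) % 2^(j+1) = 2^(j+1) - 1 - r := Nat.mod_eq_of_lt (by omega)
  have e2 : r % 2^(j+1) = r := Nat.mod_eq_of_lt hr
  unfold fold; rw [e1, e2]
  split <;> split <;> omega

lemma fold_compl {j C n : ℕ} (hd : 2^(j+1) ∣ C) (hn : n < C) :
    fold j (C - 1 - n) = fold j n := by
  set T := (2:ℕ)^(j+1) with hT
  have hTpos : 0 < T := by positivity
  obtain ⟨c, hc⟩ := hd
  have hr : n % T < T := Nat.mod_lt _ hTpos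
  have hmod : (C - 1 - n) % T = T - 1 - n % T := by
    have hmeq : (C - 1 - n) ≡ (T - 1 - n % T) [MOD T] := by
      rw [Nat.modEq_iff_dvd]
      have e0 := Nat.div_add_mod n T
      have e1 : (T:ℤ) * ((n/T : ℕ) : ℤ) + ((n % T : ℕ) : ℤ) = (n : ℤ) := by exact_mod_cast e0
      have e2 : (C:ℤ) = (T:ℤ) * c := by exact_mod_cast hc
      have hA : ((T - 1 - n % T : ℕ) : ℤ) = (T:ℤ) - 1 - ((n % T : ℕ) : ℤ) := by omega
      have hB : ((C - 1 - n : ℕ) : ℤ) = (C:ℤ) - 1 - (n : ℤ) := by omega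
      rw [hA, hB]
      refine ⟨((n/T : ℕ) : ℤ) + 1 - c, ?_⟩
      linear_combination -e2 - e1
    have := hmeq  -- (C-1-n) % T = (T-1-n%T) % T
    unfold Nat.ModEq at this
    rw [this, Nat.mod_eq_of_lt (by omega)]
  calc fold j (C - 1 - n)
      = fold j (T - 1 - n % T) := fold_congr (by
        rw [hT] at hmod ⊢
        rw [hmod]; exact (Nat.mod_eq_of_lt (by omega)).symm)
    _ = fold j (n % T) := fold_flip (by omega)
    _ = fold j n := fold_congr (by rw [hT]; exact Nat.mod_mod_of_dvd n dvd_rfl)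

lemma fold_fold {j₁ j₂ n : ℕ} (h : j₁ ≤ j₂) : fold j₁ (fold j₂ n) = fold j₁ n := by
  have hdvd : (2:ℕ)^(j₁+1) ∣ 2^(j₂+1) := pow_dvd_pow 2 (by omega)
  have hr : n % 2^(j₂+1) < 2^(j₂+1) := Nat.mod_lt _ (by positivity)
  have hcong : (n % 2^(j₂+1)) % 2^(j₁+1) = n % 2^(j₁+1) := Nat.mod_mod_of_dvd n hdvd
  by_cases hc : n % 2^(j₂+1) < 2^j₂
  · rw [show fold j₂ n = n % 2^(j₂+1) from by unfold fold; simp [hc]]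
    exact fold_congr hcong
  · rw [show fold j₂ n = 2^(j₂+1) - 1 - n % 2^(j₂+1) from by unfold fold; simp [hc]]
    rw [fold_compl hdvd hr]
    exact fold_congr hcong

lemma fold_eq_cases {j a b : ℕ} (h : fold j a = fold j b) :
    a % 2^(j+1) = b % 2^(j+1) ∨ a % 2^(j+1) + b % 2^(j+1) = 2^(j+1) - 1 := by
  have h2 := two_pow_succ j
  have ha : a % 2^(j+1) < 2^(j+1) := Nat.mod_lt _ (by positivity)
  have hb : b % 2^(j+1) < 2^(j+1) := Nat.mod_lt _ (by positivity)
  unfold fold at h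
  split_ifs at h <;> omega

lemma close_eq {T a b : ℕ} (h : a % T = b % T) (h1 : a < b + T) (h2 : b < a + T) : a = b := by
  rcases le_total a b with hab | hab
  · have hd : T ∣ b - a := (Nat.modEq_iff_dvd' hab).mp h
    rcases Nat.eq_zero_or_pos (b - a) with h0 | h0
    · omega
    · have := Nat.le_of_dvd h0 hd; omega
  · have hd : T ∣ a - b := (Nat.modEq_iff_dvd' hab).mp h.symm
    rcases Nat.eq_zero_or_pos (a - b) with h0 | h0
    · omega
    · have := Nat.le_of_dvd h0 hd; omega

noncomputable def extv {N : ℕ} (x : Fin N → ℝ) : ℕ → ℝ :=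
  fun n => if h : n < N then x ⟨n, h⟩ else 0

lemma perAux_formula (j : ℕ) : ∀ (s : ℕ) (x : Fin (2^(j+s)) → ℝ) (k : Fin (2^j)),
    perAux j s x k = ∑ n ∈ Finset.range (2^(j+s)), if fold j n = (k:ℕ) then extv x n else 0 := by
  intro s
  induction s with
  | zero =>
    intro x k
    have hcongr : ∀ n ∈ Finset.range (2^(j+0)),
        (if fold j n = (k:ℕ) then extv x n else 0) = if n = (k:ℕ) then extv x n else 0 := by
      intro n hn
      rw [fold_small (by simpa using Finset.mem_range.mp hn)]
    rw [Finset.sum_congr rfl hcongr, Finset.sum_ite_eq' (Finset.range (2^(j+0))) ((k:ℕ)) (extv x)]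
    rw [if_pos (Finset.mem_range.mpr (by simpa using k.isLt))]
    simp [perAux, extv, k.isLt]
  | succ s ih =>
    intro x k
    rw [show perAux j (s+1) x = perAux j s (halfSum (2 ^ (j + s))
      (fun k => x (Fin.cast (by rw [show j + (s + 1) = (j + s) + 1 from rfl, pow_succ]; ring) k))) from rfl]
    rw [ih]
    set N := (2:ℕ)^(j+s) with hN
    have hNN : (2:ℕ)^(j+(s+1)) = 2 * N := by
      rw [show j+(s+1) = (j+s)+1 from rfl, pow_succ]; ring
    have hval : ∀ n ∈ Finset.range N,
        (if fold j n = (k:ℕ) then extv (halfSum (2 ^ (j + s))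
            (fun k => x (Fin.cast (by rw [show j + (s + 1) = (j + s) + 1 from rfl, pow_succ]; ring) k))) n else 0)
        = (if fold j n = (k:ℕ) then extv x n else 0)
          + (if fold j (2 * N - 1 - n) = (k:ℕ) then extv x (2 * N - 1 - n) else 0) := by
      intro n hn
      have hnN : n < N := Finset.mem_range.mp hn
      have hfoldc : fold j (2 * N - 1 - n) = fold j n := by
        have : (2:ℕ)^(j+1) ∣ 2 * N := by
          rw [← hNN]; exact pow_dvd_pow 2 (by omega)
        exact fold_compl this (by omega)
      rw [hfoldc]
      by_cases hf : fold j n = (k:ℕ)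
      · rw [if_pos hf, if_pos hf, if_pos hf]
        show extv (halfSum N _) n = _
        have h1 : n < 2^(j+(s+1)) := by omega
        have h2 : 2 * N - 1 - n < 2^(j+(s+1)) := by omega
        rw [show extv (halfSum N (fun k => x (Fin.cast (by rw [show j + (s + 1) = (j + s) + 1 from rfl, pow_succ]; ring) k))) n = halfSum N (fun k => x (Fin.cast (by rw [show j + (s + 1) = (j + s) + 1 from rfl, pow_succ]; ring) k)) ⟨n, hnN⟩ from dif_pos hnN]
        unfold halfSum
        unfold extv
        rw [dif_pos h1, dif_pos h2]
        rfl
      · rw [if_neg hf, if_neg hf, if_neg hf, add_zero]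
    rw [Finset.sum_congr rfl hval, Finset.sum_add_distrib]
    rw [show Finset.range (2^(j+(s+1))) = Finset.range (N+N) from by rw [hNN, two_mul],
        Finset.sum_range_add]
    congr 1
    rw [← Finset.sum_range_reflect]
    apply Finset.sum_congr rfl
    intro n hn
    have hnN : n < N := Finset.mem_range.mp hn
    have heq : 2 * N - 1 - (N - 1 - n) = N + n := by omega
    rw [heq]

lemma extv_cast {N N' : ℕ} (e : N' = N) (x : Fin N → ℝ) :
    (extv (fun k : Fin N' => x (Fin.cast e k))) = extv x := by
  subst e; rfl

lemma reflPer_formula (J j : ℕ) (h : j ≤ J) (x : Fin (2^J) → ℝ) (k : Fin (2^j)) :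
    reflPer J j h x k = ∑ n ∈ Finset.range (2^J), if fold j n = (k:ℕ) then extv x n else 0 := by
  unfold reflPer
  rw [perAux_formula]
  have e : j + (J - j) = J := Nat.add_sub_cancel' h
  have e2 : (2:ℕ)^(j+(J-j)) = 2^J := by rw [e]
  rw [extv_cast e2 x]
  rw [show Finset.range (2^(j+(J-j))) = Finset.range (2^J) from by rw [e2]]

lemma reflPer_ne_zero (J j : ℕ) (h : j ≤ J) (m μ : ℕ) (x : Fin (2^J) → ℝ)
    (hs : ShortSupp x m μ) (hnc : NonCancel x m μ) (hT : 2*m ≤ 2^(j+1)) :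
    ∃ k : Fin (2^j), reflPer J j h x k ≠ 0 := by
  by_contra hcon
  push_neg at hcon
  set T := (2:ℕ)^(j+1) with hTdef
  have h2T := two_pow_succ j
  have hTpos : 0 < T := by positivity
  have hm1 := hs.pos
  have hbdd := hs.bdd
  have hμJ : μ < 2^J := by omega
  have hμmJ : μ + m - 1 < 2^J := by omega
  have hW : Finset.Ico μ (μ+m) ⊆ Finset.range (2^J) := by
    intro n hn; simp only [Finset.mem_Ico] at hn; exact Finset.mem_range.mpr (by omega)
  have hS : ∀ k : Fin (2^j), (∑ n ∈ Finset.Ico μ (μ+m),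
      if fold j n = (k:ℕ) then extv x n else 0) = 0 := by
    intro k
    have h0 := hcon k
    rw [reflPer_formula] at h0
    refine Eq.trans (Finset.sum_subset hW ?_) h0
    intro n hn hnW
    simp only [Finset.mem_range] at hn
    simp only [Finset.mem_Ico, not_and, not_lt] at hnW
    have hx0 : extv x n = 0 := by
      unfold extv
      rw [dif_pos hn]
      exact hs.outside ⟨n, hn⟩ (by simp only [Fin.val_mk]; omega)
    rw [hx0, ite_self]
  have hxa : extv x μ ≠ 0 := by
    unfold extv; rw [dif_pos hμJ]; exact hs.first ⟨μ, hμJ⟩ rfl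
  have hxb : extv x (μ+m-1) ≠ 0 := by
    unfold extv; rw [dif_pos hμmJ]; exact hs.last ⟨μ+m-1, hμmJ⟩ rfl
  have hmem_a : μ ∈ Finset.Ico μ (μ+m) := Finset.mem_Ico.mpr (by omega)
  have hmem_b : μ+m-1 ∈ Finset.Ico μ (μ+m) := Finset.mem_Ico.mpr (by omega)
  by_cases hA : ∃ n ∈ Finset.Ico μ (μ+m), n ≠ μ ∧ fold j n = fold j μ
  · obtain ⟨n₂, hn₂W, hn₂ne, hn₂f⟩ := hA
    have hn₂W' := Finset.mem_Ico.mp hn₂W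
    have hn₂c : n₂ % T + μ % T = T - 1 := by
      rcases fold_eq_cases hn₂f with h1 | h1 <;> rw [← hTdef] at h1
      · exact absurd (close_eq h1 (by omega) (by omega)) hn₂ne
      · exact h1
    by_cases hB : ∃ n ∈ Finset.Ico μ (μ+m), n ≠ μ+m-1 ∧ fold j n = fold j (μ+m-1)
    · obtain ⟨n₃, hn₃W, hn₃ne, hn₃f⟩ := hB
      have hn₃W' := Finset.mem_Ico.mp hn₃W
      have hn₃c : n₃ % T + (μ+m-1) % T = T - 1 := by
        rcases fold_eq_cases hn₃f with h1 | h1 <;> rw [← hTdef] at h1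
        · exact absurd (close_eq h1 (by omega) (by omega)) hn₃ne
        · exact h1
      have he1 : (n₂ + μ) % T = T - 1 := by
        rw [Nat.add_mod, hn₂c]; exact Nat.mod_eq_of_lt (by omega)
      have he2 : (n₃ + (μ+m-1)) % T = T - 1 := by
        rw [Nat.add_mod, hn₃c]; exact Nat.mod_eq_of_lt (by omega)
      have hkey : n₂ + μ = n₃ + (μ + m - 1) :=
        close_eq (he1.trans he2.symm) (by omega) (by omega)
      have hn₂v : n₂ = μ + m - 1 := by omega
      have hEven : Even m := by
        have he3 : (2*μ + m) % T = 0 := by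
          have hx1 : (2*μ + m - 1) % T = T - 1 := by
            rw [show 2*μ + m - 1 = n₂ + μ from by omega] at *
            exact he1
          have hx2 := Nat.add_mod (2*μ + m - 1) 1 T
          rw [hx1, Nat.mod_eq_of_lt (show (1:ℕ) < T from by omega)] at hx2
          rw [show T - 1 + 1 = T from by omega, Nat.mod_self] at hx2
          rw [show 2*μ + m - 1 + 1 = 2*μ + m from by omega] at hx2
          exact hx2
        have hTd : T ∣ 2*μ + m := Nat.dvd_of_mod_eq_zero he3
        have h2d : (2:ℕ) ∣ T := dvd_pow_self 2 (Nat.succ_ne_zero j)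
        have : (2:ℕ) ∣ 2*μ + m := h2d.trans hTd
        rw [Nat.even_iff]; omega
      have hne : μ ≠ n₂ := fun hq => hn₂ne hq.symm
      have hzero : ∀ c ∈ Finset.Ico μ (μ+m), c ≠ μ ∧ c ≠ n₂ →
          (if fold j c = fold j μ then extv x c else 0) = 0 := by
        rintro c hcW ⟨hcμ, hcn₂⟩
        have hcW' := Finset.mem_Ico.mp hcW
        apply if_neg
        intro hcf
        rcases fold_eq_cases hcf with h1 | h1 <;> rw [← hTdef] at h1
        · exact hcμ (close_eq h1 (by omega) (by omega))
        · have hcc : c % T = n₂ % T := by omega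
          exact hcn₂ (close_eq hcc (by omega) (by omega))
      have hpair := Finset.sum_eq_add_of_mem
        (f := fun n => if fold j n = fold j μ then extv x n else 0)
        μ n₂ hmem_a hn₂W hne hzero
      rw [show (if fold j μ = fold j μ then extv x μ else 0) = extv x μ
            from if_pos rfl,
          show (if fold j n₂ = fold j μ then extv x n₂ else 0) = extv x n₂
            from if_pos hn₂f] at hpair
      have hS_a : (∑ n ∈ Finset.Ico μ (μ+m),
          if fold j n = fold j μ then extv x n else 0) = 0 :=
        hS ⟨fold j μ, fold_lt j μ⟩
      rw [hpair] at hS_a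
      rw [hn₂v] at hS_a
      have hx1 : extv x μ = x ⟨μ, hμJ⟩ := dif_pos hμJ
      have hx2 : extv x (μ+m-1) = x ⟨μ+m-1, hμmJ⟩ := dif_pos hμmJ
      rw [hx1, hx2] at hS_a
      exact hnc hEven ⟨μ, hμJ⟩ ⟨μ+m-1, hμmJ⟩ rfl rfl hS_a
    · push_neg at hB
      have hsing := Finset.sum_eq_single_of_mem
        (f := fun n => if fold j n = fold j (μ+m-1) then extv x n else 0)
        (μ+m-1) hmem_b (fun c hcW hcne => if_neg (hB c hcW hcne))
      rw [show (if fold j (μ+m-1) = fold j (μ+m-1) then extv x (μ+m-1) else 0)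
            = extv x (μ+m-1) from if_pos rfl] at hsing
      exact hxb ((hsing.symm).trans (hS ⟨fold j (μ+m-1), fold_lt j (μ+m-1)⟩))
  · push_neg at hA
    have hsing := Finset.sum_eq_single_of_mem
      (f := fun n => if fold j n = fold j μ then extv x n else 0)
      μ hmem_a (fun c hcW hcne => if_neg (hA c hcW hcne))
    rw [show (if fold j μ = fold j μ then extv x μ else 0)
          = extv x μ from if_pos rfl] at hsing
    exact hxa ((hsing.symm).trans (hS ⟨fold j μ, fold_lt j μ⟩))

lemma fold_high {j₁ j₂ M k' : ℕ} (hj : j₁ + 1 ≤ j₂) (hM : 2*M ≤ 2^j₁)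
    (h1 : 2^j₂ - M ≤ k') (h2 : k' < 2^j₂) : fold j₁ k' < M := by
  have h2j := two_pow_succ j₁
  obtain ⟨c, hc⟩ : (2:ℕ)^(j₁+1) ∣ 2^j₂ := pow_dvd_pow 2 hj
  have hj2pos : (0:ℕ) < 2^j₂ := by positivity
  rcases c with _ | c'
  · omega
  · have hc' : (2:ℕ)^j₂ = 2^(j₁+1) * c' + 2^(j₁+1) := by rw [hc, Nat.mul_succ]
    set r := k' - (2^j₂ - 2^(j₁+1)) with hr
    have hk'eq : k' = 2^(j₁+1) * c' + r := by omega
    have hrlt : r < 2^(j₁+1) := by omega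
    have hmod : k' % 2^(j₁+1) = r := by
      rw [hk'eq, Nat.mul_add_mod]
      exact Nat.mod_eq_of_lt hrlt
    have hrge : 2^(j₁+1) - M ≤ r := by omega
    unfold fold
    rw [hmod]
    split <;> omega

lemma key_lemma (J m M μ : ℕ) (x : Fin (2^J) → ℝ) (hmM : m ≤ M)
    (hs : ShortSupp x m μ) (hnc : NonCancel x m μ)
    (j₁ j₂ : ℕ) (h₁L : Nat.clog 2 M + 1 ≤ j₁) (h₁J : j₁ ≤ J) (h₂J : j₂ ≤ J)
    (hlt : j₁ < j₂)
    (h₁ : ∀ k : Fin (2^j₁), (k:ℕ) < 2^j₁ - M → reflPer J j₁ h₁J x k = 0)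
    (h₂ : ∀ k : Fin (2^j₂), (k:ℕ) < 2^j₂ - M → reflPer J j₂ h₂J x k = 0) : False := by
  have hm1 := hs.pos
  have hM1 : 1 ≤ M := le_trans hm1 hmM
  have hclog : M ≤ 2^(Nat.clog 2 M) := Nat.le_pow_clog one_lt_two M
  have hpow : (2:ℕ)^(Nat.clog 2 M + 1) ≤ 2^j₁ := Nat.pow_le_pow_right (by norm_num) h₁L
  have hpow2 : (2:ℕ)^(Nat.clog 2 M + 1) = 2*2^(Nat.clog 2 M) := two_pow_succ _
  have hM2 : 2*M ≤ 2^j₁ := by omega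
  have h2j1 := two_pow_succ j₁
  have hT : 2*m ≤ 2^(j₁+1) := by omega
  obtain ⟨kh, hkh⟩ := reflPer_ne_zero J j₁ h₁J m μ x hs hnc hT
  have hkhM : 2^j₁ - M ≤ (kh:ℕ) := by
    by_contra hc2; push_neg at hc2; exact hkh (h₁ kh hc2)
  apply hkh
  rw [reflPer_formula]
  rw [← Finset.sum_fiberwise_of_maps_to (g := fun n => fold j₂ n) (t := Finset.range (2^j₂))
      (fun n _ => Finset.mem_range.mpr (fold_lt j₂ n))]
  apply Finset.sum_eq_zero
  intro k' hk'
  have hk'2 := Finset.mem_range.mp hk'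
  have hterm : ∀ n ∈ (Finset.range (2^J)).filter (fun n => fold j₂ n = k'),
      (if fold j₁ n = (kh:ℕ) then extv x n else 0)
      = (if fold j₁ k' = (kh:ℕ) then (if fold j₂ n = k' then extv x n else 0) else 0) := by
    intro n hn
    obtain ⟨hn1, hn2⟩ := Finset.mem_filter.mp hn
    rw [show fold j₁ n = fold j₁ k' from by rw [← hn2, fold_fold (le_of_lt hlt)]]
    rw [if_pos hn2]
  rw [Finset.sum_congr rfl hterm]
  by_cases hf : fold j₁ k' = (kh:ℕ)
  · simp only [if_pos hf]
    rcases lt_or_ge k' (2^j₂ - M) with hlow | hhigh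
    · have h0 := h₂ ⟨k', hk'2⟩ hlow
      rw [reflPer_formula] at h0
      have e1 : ∀ n ∈ (Finset.range (2^J)).filter (fun n => fold j₂ n = k'),
          (if fold j₂ n = k' then extv x n else 0) = extv x n :=
        fun n hn => if_pos (Finset.mem_filter.mp hn).2
      rw [Finset.sum_congr rfl e1, Finset.sum_filter]
      exact h0
    · exfalso
      have hfold : fold j₁ k' < M := fold_high hlt hM2 hhigh hk'2
      omega
  · simp only [if_neg hf]
    exact Finset.sum_const_zero


theorem at_most_one_support_in_last_M (J m M μ : ℕ) (x : Fin (2 ^ J) → ℝ)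
    (hmM : m ≤ M) (hs : ShortSupp x m μ) (hnc : NonCancel x m μ)
    (j₁ j₂ : ℕ) (h₁L : Nat.clog 2 M + 1 ≤ j₁) (h₁J : j₁ ≤ J)
    (h₂L : Nat.clog 2 M + 1 ≤ j₂) (h₂J : j₂ ≤ J)
    (h₁ : ∀ k : Fin (2 ^ j₁), (k : ℕ) < 2 ^ j₁ - M → reflPer J j₁ h₁J x k = 0)
    (h₂ : ∀ k : Fin (2 ^ j₂), (k : ℕ) < 2 ^ j₂ - M → reflPer J j₂ h₂J x k = 0) :
    j₁ = j₂ := by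
  rcases lt_trichotomy j₁ j₂ with hlt | heq | hgt
  · exact (key_lemma J m M μ x hmM hs hnc j₁ j₂ h₁L h₁J h₂J hlt h₁ h₂).elim
  · exact heq
  · exact (key_lemma J m M μ x hmM hs hnc j₂ j₁ h₂L h₂J h₁J hgt h₂ h₁).elim
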